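/- Let ρ be a bipartite state in the relative interior of the set of states S(H_A ⊗ H_B). Then for every l ∈ ℕ, the maximal dimension d(l,ρ) of a zero-error entanglement distillation protocol for ρ equals 1; consequently the zero-error distillable entanglement D_0(ρ) = lim_{l→∞} (1/l) log d(l,ρ) equals 0. -/

import Mathlib

open scoped ComplexOrder

/-- A density operator: positive semidefinite with trace one. -/
def IsState {γ : Type*} [Fintype γ] [DecidableEq γ] (ρ : Matrix γ γ ℂ) : Prop :=
  ρ.PosSemidef ∧ ρ.trace = 1

/-- The product operator `σ ⊗ τ`. -/
def prodOp {α β : Type*} (σ : Matrix α α ℂ) (τ : Matrix β β ℂ) :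
    Matrix (α × β) (α × β) ℂ :=
  Matrix.of fun p q => σ p.1 q.1 * τ p.2 q.2

/-- Separability of a bipartite state. -/
def SepState {α β : Type*} [Fintype α] [DecidableEq α] [Fintype β] [DecidableEq β]
    (ρ : Matrix (α × β) (α × β) ℂ) : Prop :=
  ρ ∈ convexHull ℝ
    {M : Matrix (α × β) (α × β) ℂ | ∃ σ τ, IsState σ ∧ IsState τ ∧ M = prodOp σ τ}

/-- Kraus characterization of quantum channels (CPTP maps). -/
def IsCPTP {ι κ : Type*} [Fintype ι] [DecidableEq ι] [Fintype κ] [DecidableEq κ]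
    (N : Matrix ι ι ℂ →ₗ[ℂ] Matrix κ κ ℂ) : Prop :=
  ∃ (m : ℕ) (G : Fin m → Matrix κ ι ℂ),
    (∀ a, N a = ∑ j, G j * a * (G j).conjTranspose) ∧
      (∑ j, (G j).conjTranspose * G j = 1)

/-- `ρ^{⊗l}` of a bipartite state, regrouped to the cut `H_A^{⊗l} : H_B^{⊗l}`. -/
def tensorPowBip {α β : Type*} (l : ℕ) (ρ : Matrix (α × β) (α × β) ℂ) :
    Matrix ((Fin l → α) × (Fin l → β)) ((Fin l → α) × (Fin l → β)) ℂ :=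
  Matrix.of fun p q => ∏ i, ρ (p.1 i, p.2 i) (q.1 i, q.2 i)

/-- The maximally entangled state vector on `ℂᵏ ⊗ ℂᵏ`. -/
noncomputable def maxEntVec (k : ℕ) : Fin k × Fin k → ℂ :=
  fun p => if p.1 = p.2 then ((1 / Real.sqrt k : ℝ) : ℂ) else 0

/-- `d(l,ρ)`: the maximal `k` admitting an `(l,k)` zero-error entanglement distillation
protocol for `ρ`, i.e. a CPTP map `D` which (as any LOCC operation) maps separable
states to separable states and satisfies `⟨φ_k, D(ρ^{⊗l}) φ_k⟩ = 1`. -/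
noncomputable def dZeroError {α β : Type*} [Fintype α] [DecidableEq α] [Fintype β]
    [DecidableEq β] (l : ℕ) (ρ : Matrix (α × β) (α × β) ℂ) : ℕ :=
  sSup {k : ℕ | 0 < k ∧
    ∃ D : Matrix ((Fin l → α) × (Fin l → β)) ((Fin l → α) × (Fin l → β)) ℂ →ₗ[ℂ]
        Matrix (Fin k × Fin k) (Fin k × Fin k) ℂ,
      IsCPTP D ∧ (∀ σ, IsState σ → SepState σ → SepState (D σ)) ∧
      ∑ p, ∑ q, (starRingEnd ℂ) (maxEntVec k p) * (D (tensorPowBip l ρ)) p q *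
        maxEntVec k q = 1}

/-- The zero-error distillable entanglement `D₀(ρ) = lim (1/l) log d(l,ρ)`. -/
noncomputable def D0 {α β : Type*} [Fintype α] [DecidableEq α] [Fintype β]
    [DecidableEq β] (ρ : Matrix (α × β) (α × β) ℂ) : ℝ :=
  Filter.limsup (fun l : ℕ => Real.logb 2 (dZeroError l ρ) / l) Filter.atTop

section AuxProofs
open Matrix Finset

lemma posSemidef_iff_eq_transpose_mul_self {n : Type*} [Fintype n] [DecidableEq n]
    {A : Matrix n n ℂ} : A.PosSemidef ↔ ∃ B : Matrix n n ℂ, A = Bᴴ * B := by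
  open scoped MatrixOrder in
  constructor
  · intro hA
    obtain ⟨X, hX, -, hXA⟩ :=
      CFC.exists_sqrt_of_isSelfAdjoint_of_quasispectrumRestricts hA.isHermitian
        (QuasispectrumRestricts.nnreal_of_nonneg hA.nonneg)
    exact ⟨X, by rw [← Matrix.star_eq_conjTranspose, hX.star_eq, hXA]⟩
  · rintro ⟨B, rfl⟩
    exact posSemidef_conjTranspose_mul_self B

lemma cs_aux {ι : Type*} [Fintype ι] (a b : ι → ℂ) :
    Complex.normSq (∑ j, a j * b j) ≤
      (∑ j, Complex.normSq (a j)) * (∑ j, Complex.normSq (b j)) := by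
  have h1 : ‖∑ j, a j * b j‖ ≤ ∑ j, ‖a j‖ * ‖b j‖ := by
    calc ‖∑ j, a j * b j‖ ≤ ∑ j, ‖a j * b j‖ :=
          norm_sum_le _ _
      _ = _ := by simp [_root_.map_mul]
  have h2 := Finset.sum_mul_sq_le_sq_mul_sq Finset.univ (fun j => ‖a j‖)
    (fun j => ‖b j‖)
  have h3 : Complex.normSq (∑ j, a j * b j) = (‖∑ j, a j * b j‖)^2 :=
    (Complex.sq_norm _).symm
  calc Complex.normSq (∑ j, a j * b j) = (‖∑ j, a j * b j‖)^2 := h3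
    _ ≤ (∑ j, ‖a j‖ * ‖b j‖)^2 := by
        exact pow_le_pow_left₀ (by positivity) h1 2
    _ ≤ (∑ j, (‖a j‖)^2) * (∑ j, (‖b j‖)^2) := h2
    _ = _ := by simp [Complex.sq_norm]

lemma quadform_eq {n : Type*} [Fintype n] (M : Matrix n n ℂ) (φ : n → ℂ) :
    ∑ p, ∑ q, (starRingEnd ℂ) (φ p) * M p q * φ q = star φ ⬝ᵥ M *ᵥ φ := by
  simp [dotProduct, Matrix.mulVec, Finset.mul_sum, mul_assoc]

lemma quadform_nonneg {n : Type*} [Fintype n] {M : Matrix n n ℂ} (hM : M.PosSemidef)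
    (φ : n → ℂ) : 0 ≤ (star φ ⬝ᵥ M *ᵥ φ).re := by
  have := hM.dotProduct_mulVec_nonneg φ
  rw [Complex.le_def] at this
  simpa using this.1

lemma dot_self_re {n : Type*} [Fintype n] (v : n → ℂ) :
    (star v ⬝ᵥ v).re = ∑ i, Complex.normSq (v i) := by
  have : star v ⬝ᵥ v = ∑ i, ((Complex.normSq (v i) : ℂ)) := by
    simp [dotProduct, Complex.normSq_eq_conj_mul_self]
  rw [this, Complex.re_sum]; simp

lemma trace_conj_mul_re {n : Type*} [Fintype n] (E : Matrix n n ℂ) :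
    (Eᴴ * E).trace.re = ∑ i, ∑ j, Complex.normSq (E j i) := by
  have : (Eᴴ * E).trace = ∑ i, ∑ j, ((Complex.normSq (E j i) : ℂ)) := by
    simp [Matrix.trace, Matrix.diag, Matrix.mul_apply, Matrix.conjTranspose_apply,
      Complex.normSq_eq_conj_mul_self]
  rw [this, Complex.re_sum]
  simp [Complex.re_sum]

lemma quadform_le_trace {n : Type*} [Fintype n] [DecidableEq n] {M : Matrix n n ℂ}
    (hM : M.PosSemidef) (φ : n → ℂ) (hφ : ∑ p, Complex.normSq (φ p) = 1) :
    (star φ ⬝ᵥ M *ᵥ φ).re ≤ M.trace.re := by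
  obtain ⟨C, rfl⟩ := posSemidef_iff_eq_transpose_mul_self.mp hM
  have he : star φ ⬝ᵥ (Cᴴ * C) *ᵥ φ = star (C *ᵥ φ) ⬝ᵥ (C *ᵥ φ) := by
    rw [← mulVec_mulVec, Matrix.star_mulVec, ← Matrix.dotProduct_mulVec]
  rw [he]
  have h1 : (star (C *ᵥ φ) ⬝ᵥ (C *ᵥ φ)).re = ∑ i, Complex.normSq ((C *ᵥ φ) i) := by
    simp [dotProduct, Complex.normSq_eq_conj_mul_self, Complex.re_sum, Complex.normSq_apply]
  have h2 : (Cᴴ * C).trace.re = ∑ j, ∑ i, Complex.normSq (C i j) := by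
    simp [Matrix.trace, Matrix.diag, Matrix.mul_apply, Complex.re_sum, Complex.normSq_apply,
      Complex.normSq_eq_conj_mul_self]
  rw [h1, h2]
  have h3 : ∀ i, Complex.normSq ((C *ᵥ φ) i) ≤ ∑ j, Complex.normSq (C i j) := by
    intro i
    have := cs_aux (fun j => C i j) φ
    rw [hφ, mul_one] at this
    simpa [Matrix.mulVec, dotProduct] using this
  calc ∑ i, Complex.normSq ((C *ᵥ φ) i) ≤ ∑ i, ∑ j, Complex.normSq (C i j) :=
        Finset.sum_le_sum fun i _ => h3 i
    _ = _ := Finset.sum_comm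

lemma trace_mul_le {n : Type*} [Fintype n] [DecidableEq n] {A B : Matrix n n ℂ}
    (hA : A.PosSemidef) (hB : B.PosSemidef) :
    (A * B).trace.re ≤ A.trace.re * B.trace.re := by
  obtain ⟨C, rfl⟩ := posSemidef_iff_eq_transpose_mul_self.mp hA
  obtain ⟨D, rfl⟩ := posSemidef_iff_eq_transpose_mul_self.mp hB
  have key : (Cᴴ * C * (Dᴴ * D)).trace = ((C * Dᴴ)ᴴ * (C * Dᴴ)).trace := by
    rw [conjTranspose_mul, conjTranspose_conjTranspose]
    rw [show D * Cᴴ * (C * Dᴴ) = D * (Cᴴ * C * Dᴴ) by simp only [Matrix.mul_assoc]]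
    rw [Matrix.trace_mul_comm D, show Cᴴ * C * Dᴴ * D = Cᴴ * C * (Dᴴ * D) from
      Matrix.mul_assoc _ _ _]
  rw [key]
  have h1 : ((C * Dᴴ)ᴴ * (C * Dᴴ)).trace.re = ∑ i, ∑ j, Complex.normSq ((C * Dᴴ) j i) :=
    trace_conj_mul_re _
  have h2 : (Cᴴ * C).trace.re = ∑ j, ∑ i, Complex.normSq (C i j) := trace_conj_mul_re C
  have h3 : (Dᴴ * D).trace.re = ∑ j, ∑ i, Complex.normSq (D i j) := trace_conj_mul_re D
  rw [h1, h2, h3]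
  have h4 : ∀ i j, Complex.normSq ((C * Dᴴ) j i) ≤
      (∑ k, Complex.normSq (C j k)) * (∑ k, Complex.normSq (D i k)) := by
    intro i j
    have := cs_aux (fun k => C j k) (fun k => (starRingEnd ℂ) (D i k))
    simpa [Matrix.mul_apply, Matrix.conjTranspose_apply, Complex.normSq_conj] using this
  calc ∑ i, ∑ j, Complex.normSq ((C * Dᴴ) j i)
      ≤ ∑ i, ∑ j, (∑ k, Complex.normSq (C j k)) * (∑ k, Complex.normSq (D i k)) :=
        Finset.sum_le_sum fun i _ => Finset.sum_le_sum fun j _ => h4 i j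
    _ = (∑ j, ∑ k, Complex.normSq (C j k)) * (∑ i, ∑ k, Complex.normSq (D i k)) := by
        rw [Finset.sum_comm, ← Finset.sum_mul_sum]
    _ = _ := by congr 1 <;> exact Finset.sum_comm

lemma psd_sum {n ι : Type*} [Fintype n] (s : Finset ι) (f : ι → Matrix n n ℂ)
    (h : ∀ i ∈ s, (f i).PosSemidef) : (∑ i ∈ s, f i).PosSemidef := by
  classical
  induction s using Finset.induction_on with
  | empty => simpa using Matrix.PosSemidef.zero
  | insert _ _ hnot ih =>
      rw [Finset.sum_insert hnot]
      exact ((h _ (Finset.mem_insert_self _ _)).add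
        (ih fun i hi => h i (Finset.mem_insert_of_mem hi)))

lemma sitewise_psd {α β : Type*} [Fintype α] [DecidableEq α] [Fintype β] [DecidableEq β]
    {l : ℕ} (ν : Fin l → Matrix (α × β) (α × β) ℂ) (hν : ∀ i, (ν i).PosSemidef) :
    (Matrix.of fun (p q : (Fin l → α) × (Fin l → β)) =>
      ∏ i, ν i (p.1 i, p.2 i) (q.1 i, q.2 i)).PosSemidef := by
  choose B hB using fun i => posSemidef_iff_eq_transpose_mul_self.mp (hν i)
  set C : Matrix (Fin l → α × β) ((Fin l → α) × (Fin l → β)) ℂ :=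
    Matrix.of fun c p => ∏ i, B i (c i) (p.1 i, p.2 i) with hC
  have key : (Matrix.of fun (p q : (Fin l → α) × (Fin l → β)) =>
      ∏ i, ν i (p.1 i, p.2 i) (q.1 i, q.2 i)) = Cᴴ * C := by
    ext p q
    have : ∀ i, ν i (p.1 i, p.2 i) (q.1 i, q.2 i)
        = ∑ x : α × β, (starRingEnd ℂ) (B i x (p.1 i, p.2 i)) * B i x (q.1 i, q.2 i) := by
      intro i
      rw [hB i]
      simp [Matrix.mul_apply, Matrix.conjTranspose_apply]
    simp only [Matrix.of_apply, this]
    rw [Fintype.prod_sum (fun i x => (starRingEnd ℂ) (B i x (p.1 i, p.2 i)) * B i x (q.1 i, q.2 i))]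
    simp only [Matrix.mul_apply, Matrix.conjTranspose_apply, hC, Matrix.of_apply]
    congr 1
    ext c
    rw [show star (∏ i : Fin l, B i (c i) (p.1 i, p.2 i))
        = ∏ i : Fin l, (starRingEnd ℂ) (B i (c i) (p.1 i, p.2 i)) by
      rw [star_prod]; rfl]
    rw [← Finset.prod_mul_distrib]
  rw [key]
  exact Matrix.posSemidef_conjTranspose_mul_self C

lemma trace_tensorPowBip {α β : Type*} [Fintype α] [DecidableEq α] [Fintype β]
    [DecidableEq β] (l : ℕ) (ρ : Matrix (α × β) (α × β) ℂ) :
    (tensorPowBip l ρ).trace = ρ.trace ^ l := by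
  have h1 : (tensorPowBip l ρ).trace
      = ∑ p : (Fin l → α) × (Fin l → β), ∏ i, ρ (p.1 i, p.2 i) (p.1 i, p.2 i) := by
    simp [Matrix.trace, Matrix.diag, tensorPowBip]
  rw [h1]
  rw [← Fintype.sum_equiv (Equiv.arrowProdEquivProdArrow (Fin l) (fun _ => α) (fun _ => β))
    (fun x : Fin l → α × β => ∏ i, ρ (x i) (x i))
    (fun p : (Fin l → α) × (Fin l → β) => ∏ i, ρ (p.1 i, p.2 i) (p.1 i, p.2 i))
    (fun x => by simp [Equiv.arrowProdEquivProdArrow])]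
  rw [← Fintype.prod_sum (fun (_ : Fin l) (x : α × β) => ρ x x)]
  simp [Matrix.trace, Matrix.diag]

lemma smul_one_entry {n : Type*} [DecidableEq n] (ε : ℂ) (i j : n) :
    (ε • (1 : Matrix n n ℂ)) i j = if i = j then ε else 0 := by
  simp [Matrix.smul_apply, Matrix.one_apply, mul_ite]

lemma tensor_sub_psd {α β : Type*} [Fintype α] [DecidableEq α] [Fintype β] [DecidableEq β]
    (ρ : Matrix (α × β) (α × β) ℂ) (ε : ℝ)
    (hε : 0 ≤ ε) (h : (ρ - (ε : ℂ) • 1).PosSemidef) (l : ℕ) :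
    (tensorPowBip l ρ - ((ε : ℂ) ^ l) • 1).PosSemidef := by
  classical
  set N : Matrix (α × β) (α × β) ℂ := ρ - (ε : ℂ) • 1 with hN
  set M : Finset (Fin l) → Matrix ((Fin l → α) × (Fin l → β)) ((Fin l → α) × (Fin l → β)) ℂ :=
    fun t => Matrix.of fun p q => ∏ i,
      (if i ∈ t then (ε : ℂ) • (1 : Matrix (α × β) (α × β) ℂ) else N) (p.1 i, p.2 i) (q.1 i, q.2 i)
    with hM
  have hMpsd : ∀ t, (M t).PosSemidef := by
    intro t
    apply sitewise_psd
    intro i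
    by_cases hi : i ∈ t <;> simp only [hi, if_true, if_false]
    · have : (ε : ℂ) • (1 : Matrix (α × β) (α × β) ℂ) = Matrix.diagonal (fun _ => (ε : ℂ)) := by
        ext i j
        by_cases hij : i = j <;> simp [smul_one_entry, hij, Matrix.diagonal]
      rw [this]
      refine Matrix.posSemidef_diagonal_iff.mpr fun i => ?_
      exact_mod_cast hε
    · exact h
  have hsplit : ∀ (f g : Fin l → ℂ) (t : Finset (Fin l)),
      (∏ i, if i ∈ t then f i else g i) = (∏ i ∈ t, f i) * ∏ i ∈ tᶜ, g i := by
    intro f g t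
    rw [Finset.prod_ite]
    congr 1
    · apply Finset.prod_congr _ (fun _ _ => rfl)
      ext i; simp
    · apply Finset.prod_congr _ (fun _ _ => rfl)
      ext i; simp
  have hρent : ∀ x y, ρ x y = ((ε : ℂ) • (1 : Matrix (α × β) (α × β) ℂ)) x y + N x y := by
    intro x y; simp [hN]
  have hexp : tensorPowBip l ρ = ∑ t : Finset (Fin l), M t := by
    ext p q
    rw [Matrix.sum_apply]
    show (∏ i, ρ (p.1 i, p.2 i) (q.1 i, q.2 i)) = _
    simp only [hρent]
    rw [Fintype.prod_add (fun i => ((ε : ℂ) • (1 : Matrix (α × β) (α × β) ℂ)) (p.1 i, p.2 i) (q.1 i, q.2 i))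
      (fun i => N (p.1 i, p.2 i) (q.1 i, q.2 i))]
    refine Finset.sum_congr rfl fun t _ => ?_
    rw [hM]
    simp only [Matrix.of_apply]
    have hite : ∀ i : Fin l, (if i ∈ t then (ε : ℂ) • (1 : Matrix (α × β) (α × β) ℂ) else N)
        (p.1 i, p.2 i) (q.1 i, q.2 i)
        = if i ∈ t then ((ε : ℂ) • (1 : Matrix (α × β) (α × β) ℂ)) (p.1 i, p.2 i) (q.1 i, q.2 i)
          else N (p.1 i, p.2 i) (q.1 i, q.2 i) := by
      intro i; split <;> rfl
    rw [Finset.prod_congr rfl fun i _ => hite i]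
    rw [hsplit (fun i => ((ε : ℂ) • (1 : Matrix (α × β) (α × β) ℂ)) (p.1 i, p.2 i) (q.1 i, q.2 i))
      (fun i => N (p.1 i, p.2 i) (q.1 i, q.2 i)) t]
  have hMuniv : M Finset.univ = ((ε : ℂ) ^ l) • (1 : Matrix ((Fin l → α) × (Fin l → β)) ((Fin l → α) × (Fin l → β)) ℂ) := by
    ext p q
    rw [hM]
    simp only [Matrix.of_apply, Finset.mem_univ, if_true]
    by_cases hpq : p = q
    · subst hpq
      have hent : ∀ x : Fin l, ((ε : ℂ) • (1 : Matrix (α × β) (α × β) ℂ))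
          (p.1 x, p.2 x) (p.1 x, p.2 x) = (ε : ℂ) := by
        intro x; rw [smul_one_entry, if_pos rfl]
      rw [Finset.prod_congr rfl fun x _ => hent x, Finset.prod_const]
      simp [smul_one_entry]
    · have hw : ∃ i : Fin l, (p.1 i, p.2 i) ≠ (q.1 i, q.2 i) := by
        by_contra hc
        push_neg at hc
        apply hpq
        simp only [Prod.mk.injEq] at hc
        exact Prod.ext_iff.mpr ⟨funext fun i => (hc i).1, funext fun i => (hc i).2⟩
      obtain ⟨i, hi⟩ := hw
      rw [Finset.prod_eq_zero (Finset.mem_univ i) (by rw [smul_one_entry, if_neg hi])]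
      rw [smul_one_entry, if_neg hpq]
  have hfin : tensorPowBip l ρ - ((ε : ℂ) ^ l) • 1 = ∑ t ∈ Finset.univ.erase Finset.univ, M t := by
    rw [hexp, ← hMuniv, ← Finset.add_sum_erase Finset.univ M (Finset.mem_univ Finset.univ)]
    abel
  rw [hfin]
  exact psd_sum _ _ fun t _ => hMpsd t

lemma exists_eps {n : Type*} [Fintype n] [DecidableEq n] [Nonempty n]
    {ρ : Matrix n n ℂ} (hpos : ρ.PosDef) :
    ∃ ε : ℝ, 0 < ε ∧ (ρ - (ε : ℂ) • 1).PosSemidef := by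
  have hH := hpos.1
  set ε := Finset.univ.inf' Finset.univ_nonempty hH.eigenvalues with hε
  refine ⟨ε, ?_, ?_⟩
  · obtain ⟨i, _, hi⟩ := Finset.exists_mem_eq_inf' Finset.univ_nonempty hH.eigenvalues
    rw [hε, hi]
    exact hpos.eigenvalues_pos i
  · have hspec := hH.spectral_theorem
    set U : Matrix n n ℂ := (hH.eigenvectorUnitary : Matrix n n ℂ) with hU
    have hUU : U * star U = 1 := (Matrix.mem_unitaryGroup_iff).mp hH.eigenvectorUnitary.2
    have h1 : (ε : ℂ) • (1 : Matrix n n ℂ)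
        = U * Matrix.diagonal (fun _ => (ε : ℂ)) * star U := by
      have : Matrix.diagonal (fun _ : n => (ε : ℂ)) = (ε : ℂ) • 1 := by
        ext i j; by_cases hij : i = j <;> simp [Matrix.diagonal, hij, Matrix.one_apply]
      rw [this, Matrix.mul_smul, Matrix.mul_one, Matrix.smul_mul, hUU]
    have h2 : ρ - (ε : ℂ) • 1
        = U * Matrix.diagonal (fun i => ((hH.eigenvalues i - ε : ℝ) : ℂ)) * star U := by
      rw [h1]
      conv_lhs => rw [hspec, Unitary.conjStarAlgAut_apply]
      rw [← Matrix.sub_mul, ← Matrix.mul_sub, Matrix.diagonal_sub]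
      congr 2
      ext i
      simp [Complex.ofReal_sub]
    rw [h2, Matrix.star_eq_conjTranspose]
    apply Matrix.PosSemidef.mul_mul_conjTranspose_same
    refine Matrix.posSemidef_diagonal_iff.mpr fun i => ?_
    have : ε ≤ hH.eigenvalues i := Finset.inf'_le _ (Finset.mem_univ i)
    exact_mod_cast sub_nonneg.mpr this

lemma cptp_psd {ι κ : Type*} [Fintype ι] [DecidableEq ι] [Fintype κ] [DecidableEq κ]
    {N : Matrix ι ι ℂ →ₗ[ℂ] Matrix κ κ ℂ} (hN : IsCPTP N) {a : Matrix ι ι ℂ}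
    (ha : a.PosSemidef) : (N a).PosSemidef := by
  obtain ⟨m, G, hG, -⟩ := hN
  rw [hG]
  exact psd_sum _ _ fun j _ => ha.mul_mul_conjTranspose_same (G j)

lemma cptp_trace {ι κ : Type*} [Fintype ι] [DecidableEq ι] [Fintype κ] [DecidableEq κ]
    {N : Matrix ι ι ℂ →ₗ[ℂ] Matrix κ κ ℂ} (hN : IsCPTP N) (a : Matrix ι ι ℂ) :
    (N a).trace = a.trace := by
  obtain ⟨m, G, hG, hsum⟩ := hN
  rw [hG, Matrix.trace_sum]
  have : ∀ j, (G j * a * (G j)ᴴ).trace = ((G j)ᴴ * G j * a).trace := by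
    intro j
    rw [Matrix.trace_mul_comm, Matrix.mul_assoc]
  rw [Finset.sum_congr rfl fun j _ => this j, ← Matrix.trace_sum]
  rw [show (∑ j, (G j)ᴴ * G j * a) = (∑ j, (G j)ᴴ * G j) * a from (Finset.sum_mul _ _ _).symm]
  rw [hsum, Matrix.one_mul]

lemma maxEntVec_normSq {k : ℕ} (hk : 0 < k) :
    ∑ p, Complex.normSq (maxEntVec k p) = 1 := by
  rw [Fintype.sum_prod_type]
  simp only [maxEntVec]
  have : ∀ i : Fin k, ∑ j : Fin k,
      Complex.normSq (if i = j then ((1 / Real.sqrt k : ℝ) : ℂ) else 0)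
      = (1 / k : ℝ) := by
    intro i
    rw [Finset.sum_eq_single i]
    · rw [if_pos rfl, Complex.normSq_ofReal]
      rw [div_mul_div_comm, one_mul, Real.mul_self_sqrt (Nat.cast_nonneg k)]
    · intro j _ hj; rw [if_neg (Ne.symm hj)]; simp
    · intro h; exact absurd (Finset.mem_univ i) h
  rw [Finset.sum_congr rfl fun i _ => this i, Finset.sum_const, Finset.card_univ,
    Fintype.card_fin, nsmul_eq_mul]
  field_simp

lemma prodOp_quadform {k : ℕ} (σ τ : Matrix (Fin k) (Fin k) ℂ) :
    star (maxEntVec k) ⬝ᵥ prodOp σ τ *ᵥ maxEntVec k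
      = ((1 / k : ℝ) : ℂ) * ∑ i, ∑ j, σ i j * τ i j := by
  have : star (maxEntVec k) ⬝ᵥ prodOp σ τ *ᵥ maxEntVec k
      = ∑ p, ∑ q, (starRingEnd ℂ) (maxEntVec k p) * (prodOp σ τ) p q * maxEntVec k q := by
    simp [dotProduct, Matrix.mulVec, Finset.mul_sum, mul_assoc]
  rw [this]
  rw [Fintype.sum_prod_type]
  have hinner : ∀ i i' : Fin k,
      (∑ q : Fin k × Fin k, (starRingEnd ℂ) (maxEntVec k (i, i')) * (prodOp σ τ) (i, i') q * maxEntVec k q)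
      = (starRingEnd ℂ) (maxEntVec k (i, i')) * ∑ j, σ i j * τ i' j * ((1 / Real.sqrt k : ℝ) : ℂ) := by
    intro i i'
    rw [Fintype.sum_prod_type, Finset.mul_sum]
    refine Finset.sum_congr rfl fun j _ => ?_
    rw [Finset.sum_eq_single j]
    · simp only [maxEntVec, prodOp, Matrix.of_apply, if_pos rfl]
      simp; ring
    · intro j' _ hj'
      simp only [maxEntVec]
      rw [if_neg (Ne.symm hj')]
      simp
    · intro h; exact absurd (Finset.mem_univ j) h
  rw [Finset.sum_congr rfl fun i _ => Finset.sum_congr rfl fun i' _ => hinner i i']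
  have houter : ∀ i i' : Fin k, (starRingEnd ℂ) (maxEntVec k (i, i'))
        * ∑ j, σ i j * τ i' j * ((1 / Real.sqrt k : ℝ) : ℂ)
      = if i = i' then ((1 / Real.sqrt k : ℝ) : ℂ) * ((1 / Real.sqrt k : ℝ) : ℂ)
          * ∑ j, σ i j * τ i' j else 0 := by
    intro i i'
    simp only [maxEntVec]
    by_cases hii : i = i'
    · rw [if_pos hii, if_pos hii, Complex.conj_ofReal, ← Finset.sum_mul]; ring
    · rw [if_neg hii, if_neg hii, map_zero, zero_mul]
  rw [Finset.sum_congr rfl fun i _ => Finset.sum_congr rfl fun i' _ => houter i i']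
  have hr : ((1 / Real.sqrt k : ℝ) : ℂ) * ((1 / Real.sqrt k : ℝ) : ℂ) = ((1 / k : ℝ) : ℂ) := by
    rw [← Complex.ofReal_mul]
    congr 1
    rw [div_mul_div_comm, one_mul, Real.mul_self_sqrt (Nat.cast_nonneg k)]
  have : ∀ i : Fin k, (∑ i' : Fin k, if i = i' then ((1 / Real.sqrt k : ℝ) : ℂ)
        * ((1 / Real.sqrt k : ℝ) : ℂ) * ∑ j, σ i j * τ i' j else 0)
      = ((1 / k : ℝ) : ℂ) * ∑ j, σ i j * τ i j := by
    intro i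
    rw [Finset.sum_ite_eq, if_pos (Finset.mem_univ i), hr]
  rw [Finset.sum_congr rfl fun i _ => this i, ← Finset.mul_sum]

lemma sep_bound {k : ℕ} {M : Matrix (Fin k × Fin k) (Fin k × Fin k) ℂ}
    (hM : SepState M) :
    (star (maxEntVec k) ⬝ᵥ M *ᵥ maxEntVec k).re ≤ 1 / k := by
  set φ := maxEntVec k with hφ
  have hlin : IsLinearMap ℝ (fun M : Matrix (Fin k × Fin k) (Fin k × Fin k) ℂ =>
      (star φ ⬝ᵥ M *ᵥ φ).re) := by
    constructor
    · intro x y; rw [Matrix.add_mulVec, dotProduct_add, Complex.add_re]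
    · intro c x
      rw [Matrix.smul_mulVec, dotProduct_smul]
      simp [Complex.real_smul]
  refine convexHull_min ?_ (convex_halfSpace_le hlin (1 / k)) hM
  rintro M ⟨σ, τ, hσ, hτ, rfl⟩
  show (star φ ⬝ᵥ prodOp σ τ *ᵥ φ).re ≤ 1 / k
  rw [hφ, prodOp_quadform]
  have hz : (∑ i, ∑ j, σ i j * τ i j) = (σ * τᵀ).trace := by
    simp [Matrix.trace, Matrix.diag, Matrix.mul_apply, Matrix.transpose_apply]
  rw [hz]
  have h1 : (((1 / k : ℝ) : ℂ) * (σ * τᵀ).trace).re = (1 / k : ℝ) * ((σ * τᵀ).trace).re := by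
    simp [Complex.re_ofReal_mul]
  rw [h1]
  have h2 : ((σ * τᵀ).trace).re ≤ 1 := by
    have := trace_mul_le hσ.1 hτ.1.transpose
    rw [Matrix.trace_transpose] at this
    rw [hσ.2, hτ.2] at this
    simpa using this
  have h3 : (0:ℝ) ≤ 1 / k := by positivity
  calc (1 / k : ℝ) * ((σ * τᵀ).trace).re ≤ (1 / k) * 1 := by
        exact mul_le_mul_of_nonneg_left h2 h3
    _ = 1 / k := mul_one _

lemma smul_one_psd {n : Type*} [Fintype n] [DecidableEq n] {r : ℝ} (hr : 0 ≤ r) :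
    (((r : ℂ)) • (1 : Matrix n n ℂ)).PosSemidef := by
  have : (r : ℂ) • (1 : Matrix n n ℂ) = Matrix.diagonal (fun _ => (r : ℂ)) := by
    ext i j
    by_cases hij : i = j <;> simp [smul_one_entry, hij, Matrix.diagonal]
  rw [this]
  exact Matrix.posSemidef_diagonal_iff.mpr fun i => by exact_mod_cast hr

lemma no_big_k {α β : Type*} [Fintype α] [DecidableEq α] [Fintype β] [DecidableEq β]
    [Nonempty α] [Nonempty β] (ρ : Matrix (α × β) (α × β) ℂ)
    (hpos : ρ.PosDef) (htr : ρ.trace = 1) (l k : ℕ) (hk2 : 2 ≤ k)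
    (D : Matrix ((Fin l → α) × (Fin l → β)) ((Fin l → α) × (Fin l → β)) ℂ →ₗ[ℂ]
        Matrix (Fin k × Fin k) (Fin k × Fin k) ℂ)
    (hcptp : IsCPTP D) (hsep : ∀ σ, IsState σ → SepState σ → SepState (D σ))
    (hfid : ∑ p, ∑ q, (starRingEnd ℂ) (maxEntVec k p) * (D (tensorPowBip l ρ)) p q *
        maxEntVec k q = 1) : False := by
  obtain ⟨ε, hε, hN⟩ := exists_eps hpos
  set φ := maxEntVec k with hφdef
  set NA : ℕ := Fintype.card (Fin l → α) with hNA
  set NB : ℕ := Fintype.card (Fin l → β) with hNB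
  set NN : ℕ := Fintype.card ((Fin l → α) × (Fin l → β)) with hNN
  have hNNeq : NN = NA * NB := Fintype.card_prod _ _
  have hNApos : 0 < NA := Fintype.card_pos
  have hNBpos : 0 < NB := Fintype.card_pos
  have hNNpos : 0 < NN := Fintype.card_pos
  -- the maximally mixed state on the big space
  set S0 : Matrix ((Fin l → α) × (Fin l → β)) ((Fin l → α) × (Fin l → β)) ℂ :=
    (((NN : ℝ)⁻¹ : ℝ) : ℂ) • 1 with hS0
  have hS0state : IsState S0 := by
    constructor
    · exact smul_one_psd (by positivity)
    · rw [hS0, Matrix.trace_smul, Matrix.trace_one]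
      rw [smul_eq_mul]
      push_cast
      rw [inv_mul_cancel₀]
      exact_mod_cast hNNpos.ne'
  have hS0sep : SepState S0 := by
    set σA : Matrix (Fin l → α) (Fin l → α) ℂ := (((NA : ℝ)⁻¹ : ℝ) : ℂ) • 1 with hσA
    set σB : Matrix (Fin l → β) (Fin l → β) ℂ := (((NB : ℝ)⁻¹ : ℝ) : ℂ) • 1 with hσB
    have hAstate : IsState σA := by
      constructor
      · exact smul_one_psd (by positivity)
      · rw [hσA, Matrix.trace_smul, Matrix.trace_one, smul_eq_mul]
        push_cast
        rw [inv_mul_cancel₀]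
        exact_mod_cast hNApos.ne'
    have hBstate : IsState σB := by
      constructor
      · exact smul_one_psd (by positivity)
      · rw [hσB, Matrix.trace_smul, Matrix.trace_one, smul_eq_mul]
        push_cast
        rw [inv_mul_cancel₀]
        exact_mod_cast hNBpos.ne'
    have hprod : S0 = prodOp σA σB := by
      ext p q
      rw [hS0, hσA, hσB]
      simp only [prodOp, Matrix.of_apply, smul_one_entry]
      by_cases h1 : p.1 = q.1 <;> by_cases h2 : p.2 = q.2
      · have hpq : p = q := Prod.ext_iff.mpr ⟨h1, h2⟩
        rw [if_pos hpq, if_pos h1, if_pos h2, ← Complex.ofReal_mul]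
        congr 1
        rw [hNNeq]
        push_cast
        rw [mul_inv]
      · rw [if_neg (fun hpq => h2 (by rw [hpq])), if_neg h2, mul_zero]
      · rw [if_neg (fun hpq => h1 (by rw [hpq])), if_neg h1, zero_mul]
      · rw [if_neg (fun hpq => h1 (by rw [hpq])), if_neg h1, zero_mul]
    rw [hprod]
    exact subset_convexHull ℝ _ ⟨σA, σB, hAstate, hBstate, rfl⟩
  -- decomposition of the tensor power
  set c : ℝ := ε ^ l * NN with hc
  have hcpos : 0 < c := by positivity
  set T := tensorPowBip l ρ with hT
  set X : Matrix ((Fin l → α) × (Fin l → β)) ((Fin l → α) × (Fin l → β)) ℂ :=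
    ((ε : ℂ) ^ l) • 1 with hX
  have hXc : X = ((c : ℝ) : ℂ) • S0 := by
    rw [hX, hS0, smul_smul, hc]
    congr 1
    push_cast
    rw [mul_assoc, mul_inv_cancel₀ (by exact_mod_cast hNNpos.ne'), mul_one]
  have hR : (T - X).PosSemidef := tensor_sub_psd ρ ε hε.le hN l
  -- fidelity equals 1
  have hfid' : (star φ ⬝ᵥ (D T) *ᵥ φ).re = 1 := by
    rw [← quadform_eq] at *
    rw [hfid]
    rfl
  -- split
  have hsplit : star φ ⬝ᵥ (D T) *ᵥ φ = star φ ⬝ᵥ (D X) *ᵥ φ + star φ ⬝ᵥ (D (T - X)) *ᵥ φ := by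
    have : D T = D X + D (T - X) := by
      rw [← map_add, add_sub_cancel]
    rw [this, Matrix.add_mulVec, dotProduct_add]
  -- first term
  have hterm1 : (star φ ⬝ᵥ (D X) *ᵥ φ).re ≤ c * (1 / k) := by
    have hDX : D X = ((c : ℝ) : ℂ) • D S0 := by rw [hXc, _root_.map_smul]
    rw [hDX, Matrix.smul_mulVec, dotProduct_smul, smul_eq_mul, Complex.re_ofReal_mul]
    exact mul_le_mul_of_nonneg_left (sep_bound (hsep S0 hS0state hS0sep)) hcpos.le
  -- second term
  have hterm2 : (star φ ⬝ᵥ (D (T - X)) *ᵥ φ).re ≤ 1 - c := by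
    have hDR : (D (T - X)).PosSemidef := cptp_psd hcptp hR
    have hXtr : X.trace = ((c : ℝ) : ℂ) := by
      rw [hX, Matrix.trace_smul, Matrix.trace_one, smul_eq_mul, ← hNN, hc]
      push_cast
      ring
    have htrR : (D (T - X)).trace.re = 1 - c := by
      rw [cptp_trace hcptp, Matrix.trace_sub, hT, trace_tensorPowBip, htr, one_pow, hXtr]
      simp
    calc (star φ ⬝ᵥ (D (T - X)) *ᵥ φ).re ≤ (D (T - X)).trace.re :=
          quadform_le_trace hDR φ (maxEntVec_normSq (by omega))
      _ = 1 - c := htrR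
  have hk1 : (1 / k : ℝ) ≤ 1 / 2 := by
    apply one_div_le_one_div_of_le
    · norm_num
    · exact_mod_cast hk2
  have : (1 : ℝ) ≤ c * (1 / 2) + (1 - c) := by
    have := hsplit
    have h1 : (star φ ⬝ᵥ (D T) *ᵥ φ).re
        = (star φ ⬝ᵥ (D X) *ᵥ φ).re + (star φ ⬝ᵥ (D (T - X)) *ᵥ φ).re := by
      rw [hsplit, Complex.add_re]
    have h2 : c * (1 / k) ≤ c * (1 / 2) := mul_le_mul_of_nonneg_left hk1 hcpos.le
    linarith [hfid', hterm1, hterm2]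
  linarith


lemma one_mem_set {α β : Type*} [Fintype α] [DecidableEq α] [Fintype β] [DecidableEq β]
    (ρ : Matrix (α × β) (α × β) ℂ) (htr : ρ.trace = 1) (l : ℕ) :
    ∃ D : Matrix ((Fin l → α) × (Fin l → β)) ((Fin l → α) × (Fin l → β)) ℂ →ₗ[ℂ]
        Matrix (Fin 1 × Fin 1) (Fin 1 × Fin 1) ℂ,
      IsCPTP D ∧ (∀ σ, IsState σ → SepState σ → SepState (D σ)) ∧
      ∑ p, ∑ q, (starRingEnd ℂ) (maxEntVec 1 p) * (D (tensorPowBip l ρ)) p q *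
        maxEntVec 1 q = 1 := by
  classical
  set ι := (Fin l → α) × (Fin l → β) with hι
  refine ⟨{ toFun := fun a => Matrix.of fun _ _ => a.trace,
            map_add' := fun a b => by ext; simp [Matrix.trace_add],
            map_smul' := fun c a => by ext; simp [Matrix.trace_smul] }, ?_, ?_, ?_⟩
  · -- CPTP
    refine ⟨Fintype.card ι, fun j => Matrix.of fun _ i => if i = (Fintype.equivFin ι).symm j then 1 else 0, ?_, ?_⟩
    · intro a
      ext p q
      rw [Matrix.sum_apply]
      have hterm : ∀ j, ((Matrix.of fun (_ : Fin 1 × Fin 1) i =>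
            if i = (Fintype.equivFin ι).symm j then (1:ℂ) else 0) * a *
          (Matrix.of fun (_ : Fin 1 × Fin 1) i =>
            if i = (Fintype.equivFin ι).symm j then (1:ℂ) else 0)ᴴ) p q
          = a ((Fintype.equivFin ι).symm j) ((Fintype.equivFin ι).symm j) := by
        intro j
        simp [Matrix.mul_apply, Matrix.conjTranspose_apply, ite_mul, mul_ite,
          Finset.sum_ite_eq, Finset.sum_ite_eq']
        rw [Finset.sum_eq_single ((Fintype.equivFin ι).symm j)] <;> simp_all
      rw [Finset.sum_congr rfl fun j _ => hterm j]
      rw [Equiv.sum_comp ((Fintype.equivFin ι).symm) (fun x => a x x)]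
      simp [Matrix.trace, Matrix.diag]
      rfl
    · ext i i'
      rw [Matrix.sum_apply]
      have hterm : ∀ j, ((Matrix.of fun (_ : Fin 1 × Fin 1) i =>
            if i = (Fintype.equivFin ι).symm j then (1:ℂ) else 0)ᴴ *
          (Matrix.of fun (_ : Fin 1 × Fin 1) i =>
            if i = (Fintype.equivFin ι).symm j then (1:ℂ) else 0)) i i'
          = (if i = (Fintype.equivFin ι).symm j then (1:ℂ) else 0)
            * (if i' = (Fintype.equivFin ι).symm j then (1:ℂ) else 0) := by
        intro j
        rw [Matrix.mul_apply, Fintype.sum_prod_type]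
        simp [Matrix.conjTranspose_apply, apply_ite (starRingEnd ℂ)]
      rw [Finset.sum_congr rfl fun j _ => hterm j]
      rw [Equiv.sum_comp ((Fintype.equivFin ι).symm)
        (fun x => (if i = x then (1:ℂ) else 0) * (if i' = x then (1:ℂ) else 0))]
      simp [Matrix.one_apply, Finset.sum_ite_eq, eq_comm]
      rw [Finset.sum_eq_single i'] <;> simp_all [eq_comm]
  · -- separability
    intro σ hσ _
    have hone : IsState (Matrix.of fun _ _ => (1:ℂ) : Matrix (Fin 1) (Fin 1) ℂ) := by
      have h1 : (Matrix.of fun _ _ => (1:ℂ) : Matrix (Fin 1) (Fin 1) ℂ) = 1 := by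
        ext i j
        rw [Subsingleton.elim i j]
        simp [Matrix.one_apply]
      rw [h1]
      exact ⟨Matrix.PosSemidef.one, by simp [Matrix.trace_one]⟩
    refine subset_convexHull ℝ _ ⟨_, _, hone, hone, ?_⟩
    ext p q
    simp [prodOp, hσ.2]
  · -- fidelity
    simp only [LinearMap.coe_mk, AddHom.coe_mk, Matrix.of_apply]
    rw [trace_tensorPowBip, htr, one_pow]
    simp [maxEntVec, Real.sqrt_one, Fintype.sum_prod_type]
    decide


end AuxProofs

/-- for a state `ρ` in the relative interior of the set of bipartite
states (i.e. a faithful, full-rank state), `d(l,ρ) = 1` for every `l`, and hence the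
zero-error distillable entanglement `D₀(ρ)` is `0`. -/
theorem stmt_10 {α β : Type*} [Fintype α] [DecidableEq α] [Fintype β] [DecidableEq β]
    [Nonempty α] [Nonempty β] (ρ : Matrix (α × β) (α × β) ℂ)
    (hpos : ρ.PosDef) (htr : ρ.trace = 1) :
    (∀ l : ℕ, 0 < l → dZeroError l ρ = 1) ∧ D0 ρ = 0 := by
  have hd : ∀ l : ℕ, dZeroError l ρ = 1 := by
    intro l
    have hset : {k : ℕ | 0 < k ∧
        ∃ D : Matrix ((Fin l → α) × (Fin l → β)) ((Fin l → α) × (Fin l → β)) ℂ →ₗ[ℂ]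
            Matrix (Fin k × Fin k) (Fin k × Fin k) ℂ,
          IsCPTP D ∧ (∀ σ, IsState σ → SepState σ → SepState (D σ)) ∧
          ∑ p, ∑ q, (starRingEnd ℂ) (maxEntVec k p) * (D (tensorPowBip l ρ)) p q *
            maxEntVec k q = 1} = {1} := by
      ext k
      simp only [Set.mem_setOf_eq, Set.mem_singleton_iff]
      constructor
      · rintro ⟨hk, D, hcptp, hsep, hfid⟩
        by_contra hk1
        exact no_big_k ρ hpos htr l k (by omega) D hcptp hsep hfid
      · rintro rfl
        exact ⟨one_pos, one_mem_set ρ htr l⟩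
    rw [dZeroError, hset, csSup_singleton]
  refine ⟨fun l _ => hd l, ?_⟩
  have hfun : (fun l : ℕ => Real.logb 2 (dZeroError l ρ) / l) = fun _ => (0:ℝ) := by
    funext l
    rw [hd l]
    simp
  rw [D0, hfun, Filter.limsup_const]
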